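/- arXiv:1311.4925 — 4 statements merged into one kernel-verified Lean document; each statement's English description precedes it below -/
import Mathlib

section
/- (Ajtai–Komlós–Szemerédi.) Let G be a finite triangle-free graph with maximum degree at most Δ, where Δ ≥ 1. Then α(G) ≥ (|V(G)| / (8Δ)) · log₂ Δ. -/
open Finset Real

/-- A finset of vertices is independent in `G` if no two of its elements are adjacent. -/
def IsIndepSet {α : Type*} (G : SimpleGraph α) (s : Finset α) : Prop :=
  ∀ u ∈ s, ∀ v ∈ s, ¬ G.Adj u v

/-- The independence number of a graph: the maximum size of an independent set. -/
noncomputable def indepNum {α : Type*} (G : SimpleGraph α) : ℕ :=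
  sSup {m | ∃ s : Finset α, IsIndepSet G s ∧ s.card = m}

section AKS

-- analytic lemma: logb 2 x ≤ 2 √x for x ≥ 1
lemma aks_logb_le_sqrt {x : ℝ} (hx : 1 ≤ x) : Real.logb 2 x ≤ 2 * Real.sqrt x := by
  have hx0 : (0:ℝ) ≤ x := by linarith
  set t : ℝ := Real.sqrt (Real.sqrt x) with ht
  have ht1 : 1 ≤ t := by
    apply Real.one_le_sqrt.mpr
    exact Real.one_le_sqrt.mpr hx
  have ht0 : 0 < t := by linarith
  have hlogt : Real.log t = Real.log x / 4 := by
    rw [ht, Real.log_sqrt (Real.sqrt_nonneg x), Real.log_sqrt hx0]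
    ring
  have htsq : t ^ 2 = Real.sqrt x := Real.sq_sqrt (Real.sqrt_nonneg x)
  have hlt : Real.log t ≤ t - 1 := Real.log_le_sub_one_of_pos ht0
  have hc : (0.6931471803 : ℝ) < Real.log 2 := Real.log_two_gt_d9
  have hkey : Real.log x ≤ 2 * Real.log 2 * (t ^ 2) := by
    have : Real.log x = 4 * Real.log t := by rw [hlogt]; ring
    rw [this]
    nlinarith [sq_nonneg (2 * t - 3)]
  rw [Real.logb, div_le_iff₀ (Real.log_pos one_lt_two), ← htsq]
  nlinarith [Real.log_pos (by norm_num : (1:ℝ) < 2)]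

lemma aks_key_ineq (Δ a : ℕ) (h1 : 1 ≤ Δ) (ha : a ≤ Δ) :
    ((2:ℝ) ^ a + 1) * Real.logb 2 Δ ≤ 4 * Δ + 2 * a * 2 ^ a := by
  have hΔ1 : (1:ℝ) ≤ Δ := by exact_mod_cast h1
  set L := Real.logb 2 (Δ:ℝ) with hLdef
  have hL0 : 0 ≤ L := Real.logb_nonneg one_lt_two hΔ1
  have h2a1 : (1:ℝ) ≤ 2 ^ a := one_le_pow₀ (by norm_num)
  have haΔ : (a:ℝ) ≤ Δ := by exact_mod_cast ha
  rcases le_or_gt L (2 * a) with h | h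
  · have ha0 : (0:ℝ) ≤ a := Nat.cast_nonneg a
    nlinarith [mul_le_mul_of_nonneg_left h (by linarith : (0:ℝ) ≤ (2:ℝ)^a + 1)]
  · -- 2a < L, so 2^a < √Δ
    have ha0 : (0:ℝ) ≤ a := Nat.cast_nonneg a
    have hL_pos : 0 < L := lt_of_le_of_lt (by positivity) h
    have hΔpos : (0:ℝ) < Δ := by linarith
    have hsq_pos : 0 < Real.sqrt Δ := Real.sqrt_pos.mpr hΔpos
    have hlogsqrt : Real.logb 2 (Real.sqrt Δ) = L / 2 := by
      rw [hLdef, Real.logb, Real.logb, Real.log_sqrt hΔpos.le]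
      ring
    have h2alt : (2:ℝ) ^ a ≤ Real.sqrt Δ := by
      have h1' : (a:ℝ) < Real.logb 2 (Real.sqrt Δ) := by rw [hlogsqrt]; linarith
      have := (Real.rpow_lt_rpow_left_iff (by norm_num : (1:ℝ) < 2)).mpr h1'
      rw [Real.rpow_logb (by norm_num) (by norm_num) hsq_pos, Real.rpow_natCast] at this
      exact this.le
    have hLle : L ≤ 2 * Real.sqrt Δ := aks_logb_le_sqrt hΔ1
    have hsqsq : Real.sqrt Δ * Real.sqrt Δ = Δ := Real.mul_self_sqrt hΔpos.le
    have hsqle : Real.sqrt Δ ≤ Δ := by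
      nlinarith [Real.sqrt_nonneg (Δ:ℝ), Real.one_le_sqrt.mpr hΔ1]
    have hpow0 : (0:ℝ) ≤ 2 * a * 2 ^ a := by positivity
    nlinarith [mul_le_mul h2alt hLle hL0 hsq_pos.le,
      mul_le_mul_of_nonneg_left hLle (by norm_num : (0:ℝ) ≤ 1)]

variable {α : Type*} [Fintype α] [DecidableEq α] (G : SimpleGraph α) [DecidableRel G.Adj]

instance : DecidablePred (IsIndepSet G) := fun s =>
  decidable_of_iff (∀ u ∈ s, ∀ v ∈ s, ¬ G.Adj u v) Iff.rfl

/-- The finset of all independent sets. -/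
def indepSets : Finset (Finset α) := univ.filter (IsIndepSet G)

lemma mem_indepSets {I : Finset α} : I ∈ indepSets G ↔ IsIndepSet G I := by
  simp [indepSets]

lemma indep_subset {s t : Finset α} (h : IsIndepSet G t) (hs : s ⊆ t) : IsIndepSet G s :=
  fun u hu w hw => h u (hs hu) w (hs hw)

lemma two_mul_sum_powerset_card (A : Finset α) :
    2 * ∑ S ∈ A.powerset, S.card = A.card * 2 ^ A.card := by
  induction A using Finset.induction with
  | empty => simp
  | @insert x A hx ih =>
    have hinj : ∀ S ∈ A.powerset, ∀ T ∈ A.powerset, insert x S = insert x T → S = T := by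
      intro S hS T hT hST
      have h1 : x ∉ S := fun h => hx (Finset.mem_powerset.mp hS h)
      have h2 : x ∉ T := fun h => hx (Finset.mem_powerset.mp hT h)
      calc S = (insert x S).erase x := by rw [Finset.erase_insert h1]
        _ = (insert x T).erase x := by rw [hST]
        _ = T := Finset.erase_insert h2
    have hdisj : Disjoint A.powerset (A.powerset.image (insert x)) := by
      rw [Finset.disjoint_right]
      intro S hS hS'
      obtain ⟨T, hT, rfl⟩ := Finset.mem_image.mp hS
      exact hx (Finset.mem_powerset.mp hS' (Finset.mem_insert_self x T))
    have hcard : ∀ S ∈ A.powerset, (insert x S).card = S.card + 1 := fun S hS =>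
      Finset.card_insert_of_notMem (fun h => hx (Finset.mem_powerset.mp hS h))
    rw [Finset.powerset_insert, Finset.sum_union hdisj, Finset.sum_image hinj,
      Finset.sum_congr rfl hcard, Finset.sum_add_distrib, Finset.sum_const,
      Finset.card_powerset, Finset.card_insert_of_notMem hx, pow_succ]
    simp only [smul_eq_mul, mul_one]
    nlinarith [ih]

lemma aks_fiber_eq (htf : G.CliqueFree 3) (v : α) (J : Finset α)
    (hJind : IsIndepSet G J) (hvJ : v ∉ J) (hJN : ∀ w ∈ J, ¬ G.Adj v w) :
    (indepSets G).filter (fun I => I \ insert v (G.neighborFinset v) = J)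
      = insert (insert v J)
          (((G.neighborFinset v).filter (fun u => ∀ w ∈ J, ¬ G.Adj u w)).powerset.image
            (fun S => J ∪ S)) := by
  set N := G.neighborFinset v with hN
  set A := N.filter (fun u => ∀ w ∈ J, ¬ G.Adj u w) with hA
  have hmemN : ∀ x, x ∈ N ↔ G.Adj v x := fun x => SimpleGraph.mem_neighborFinset G v x
  ext I
  simp only [Finset.mem_filter, mem_indepSets, Finset.mem_insert, Finset.mem_image,
    Finset.mem_powerset]
  constructor
  · rintro ⟨hI, hIJ⟩
    have hJsub : J ⊆ I := hIJ ▸ Finset.sdiff_subset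
    by_cases hv : v ∈ I
    · left
      ext x
      simp only [Finset.mem_insert]
      constructor
      · intro hx
        by_cases hxv : x = v
        · exact Or.inl hxv
        · right
          rw [← hIJ, Finset.mem_sdiff]
          refine ⟨hx, ?_⟩
          simp only [Finset.mem_insert, hmemN]
          rintro (rfl | hadj)
          · exact hxv rfl
          · exact hI v hv x hx hadj
      · rintro (rfl | hx)
        · exact hv
        · exact hJsub hx
    · right
      refine ⟨I ∩ N, ?_, ?_⟩
      · intro u hu
        rw [Finset.mem_inter] at hu
        rw [hA, Finset.mem_filter]
        exact ⟨hu.2, fun w hw => hI u hu.1 w (hJsub hw)⟩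
      · ext x
        simp only [Finset.mem_union, Finset.mem_inter]
        constructor
        · rintro (hx | ⟨hx, _⟩)
          · exact hJsub hx
          · exact hx
        · intro hx
          by_cases hxN : x ∈ N
          · exact Or.inr ⟨hx, hxN⟩
          · left
            rw [← hIJ, Finset.mem_sdiff]
            refine ⟨hx, ?_⟩
            simp only [Finset.mem_insert]
            rintro (rfl | h)
            · exact hv hx
            · exact hxN h
  · rintro (rfl | ⟨S, hS, rfl⟩)
    · constructor
      · intro u hu w hw h
        rcases Finset.mem_insert.mp hu with hu1 | hu2
        · rcases Finset.mem_insert.mp hw with hw1 | hw2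
          · rw [hu1, hw1] at h; exact G.irrefl h
          · rw [hu1] at h; exact hJN w hw2 h
        · rcases Finset.mem_insert.mp hw with hw1 | hw2
          · rw [hw1] at h; exact hJN u hu2 (G.adj_symm h)
          · exact hJind u hu2 w hw2 h
      · ext x
        simp only [Finset.mem_sdiff, Finset.mem_insert, hmemN]
        constructor
        · rintro ⟨rfl | hx, hx2⟩
          · exact absurd (Or.inl rfl) hx2
          · exact hx
        · intro hx
          refine ⟨Or.inr hx, ?_⟩
          rintro (rfl | hadj)
          · exact hvJ hx
          · exact hJN x hx hadj
    · have hSA : ∀ u ∈ S, G.Adj v u ∧ ∀ w ∈ J, ¬ G.Adj u w := by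
        intro u hu
        have := hS hu
        rw [hA, Finset.mem_filter, hmemN] at this
        exact this
      constructor
      · intro u hu w hw
        rcases Finset.mem_union.mp hu with hu | hu
        · rcases Finset.mem_union.mp hw with hw | hw
          · exact hJind u hu w hw
          · exact fun h => (hSA w hw).2 u hu (G.adj_symm h)
        · rcases Finset.mem_union.mp hw with hw | hw
          · exact (hSA u hu).2 w hw
          · intro h
            exact htf {v, u, w} (SimpleGraph.is3Clique_triple_iff.mpr
              ⟨(hSA u hu).1, (hSA w hw).1, h⟩)
      · ext x
        simp only [Finset.mem_sdiff, Finset.mem_union, Finset.mem_insert, hmemN]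
        constructor
        · rintro ⟨hx | hx, hx2⟩
          · exact hx
          · exact absurd (Or.inr (hSA x hx).1) hx2
        · intro hx
          refine ⟨Or.inl hx, ?_⟩
          rintro (rfl | hadj)
          · exact hvJ hx
          · exact hJN x hx hadj

lemma aks_vertex_bound (htf : G.CliqueFree 3) (Δ : ℕ) (h1 : 1 ≤ Δ) (v : α)
    (hdeg : G.degree v ≤ Δ) :
    ((indepSets G).card : ℝ) * Real.logb 2 Δ ≤
      ∑ I ∈ indepSets G,
        ((4 * Δ * (if v ∈ I then 1 else 0) + 4 * (I ∩ G.neighborFinset v).card : ℕ) : ℝ) := by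
  classical
  set N := G.neighborFinset v with hN
  have hmemN : ∀ x, x ∈ N ↔ G.Adj v x := fun x => SimpleGraph.mem_neighborFinset G v x
  set g : Finset α → Finset α := fun I => I \ insert v N with hg
  set T := (indepSets G).image g with hT
  have hmaps : ∀ I ∈ indepSets G, g I ∈ T := fun I hI => Finset.mem_image_of_mem g hI
  rw [Finset.card_eq_sum_card_fiberwise hmaps, ← Finset.sum_fiberwise_of_maps_to hmaps,
    Nat.cast_sum, Finset.sum_mul]
  apply Finset.sum_le_sum
  intro J hJ
  obtain ⟨I₀, hI₀, hI₀J⟩ := Finset.mem_image.mp hJ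
  have hI₀ind : IsIndepSet G I₀ := (mem_indepSets G).mp hI₀
  have hJind : IsIndepSet G J := indep_subset G hI₀ind (hI₀J ▸ Finset.sdiff_subset)
  have hvJ : v ∉ J := by
    rw [← hI₀J, hg]
    simp
  have hJN : ∀ w ∈ J, ¬ G.Adj v w := by
    intro w hw
    rw [← hI₀J, hg, Finset.mem_sdiff] at hw
    simp only [Finset.mem_insert, hmemN, not_or] at hw
    exact hw.2.2
  have hfib : (indepSets G).filter (fun I => g I = J)
      = insert (insert v J) ((N.filter (fun u => ∀ w ∈ J, ¬ G.Adj u w)).powerset.image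
          (fun S => J ∪ S)) := aks_fiber_eq G htf v J hJind hvJ hJN
  set A := N.filter (fun u => ∀ w ∈ J, ¬ G.Adj u w) with hA
  have haΔ : A.card ≤ Δ := le_trans (Finset.card_filter_le N _) hdeg
  have hAN : A ⊆ N := Finset.filter_subset _ _
  have hvnot : insert v J ∉ A.powerset.image (fun S => J ∪ S) := by
    intro h
    obtain ⟨S, hS, hSJ⟩ := Finset.mem_image.mp h
    have hv : v ∈ J ∪ S := hSJ ▸ Finset.mem_insert_self v J
    rcases Finset.mem_union.mp hv with h' | h'
    · exact hvJ h'
    · exact G.irrefl ((hmemN v).mp (hAN (Finset.mem_powerset.mp hS h')))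
  have hinj : ∀ S₁ ∈ A.powerset, ∀ S₂ ∈ A.powerset, J ∪ S₁ = J ∪ S₂ → S₁ = S₂ := by
    intro S₁ hS₁ S₂ hS₂ h
    rw [Finset.mem_powerset] at hS₁ hS₂
    ext x
    constructor
    · intro hx
      have hxN : x ∈ N := hAN (hS₁ hx)
      have hx2 : x ∈ J ∪ S₂ := h ▸ Finset.mem_union_right J hx
      rcases Finset.mem_union.mp hx2 with h' | h'
      · exact absurd ((hmemN x).mp hxN) (hJN x h')
      · exact h'
    · intro hx
      have hxN : x ∈ N := hAN (hS₂ hx)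
      have hx2 : x ∈ J ∪ S₁ := h.symm ▸ Finset.mem_union_right J hx
      rcases Finset.mem_union.mp hx2 with h' | h'
      · exact absurd ((hmemN x).mp hxN) (hJN x h')
      · exact h'
  have hJScap : ∀ S ∈ A.powerset, (J ∪ S) ∩ N = S := by
    intro S hS
    rw [Finset.mem_powerset] at hS
    ext x
    simp only [Finset.mem_inter, Finset.mem_union]
    constructor
    · rintro ⟨hx | hx, hxN⟩
      · exact absurd ((hmemN x).mp hxN) (hJN x hx)
      · exact hx
    · intro hx
      exact ⟨Or.inr hx, hAN (hS hx)⟩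
  have hfS : ∀ S ∈ A.powerset,
      4 * Δ * (if v ∈ J ∪ S then 1 else 0) + 4 * ((J ∪ S) ∩ N).card = 4 * S.card := by
    intro S hS
    have hvnotJS : v ∉ J ∪ S := by
      rw [Finset.mem_union]
      rintro (h' | h')
      · exact hvJ h'
      · exact G.irrefl ((hmemN v).mp (hAN (Finset.mem_powerset.mp hS h')))
    rw [if_neg hvnotJS, hJScap S hS, mul_zero, zero_add]
  have hcap : (insert v J) ∩ N = ∅ := by
    ext x
    simp only [Finset.mem_inter, Finset.mem_insert, Finset.notMem_empty, iff_false, not_and]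
    rintro (rfl | hx)
    · intro h; exact G.irrefl ((hmemN x).mp h)
    · intro h; exact hJN x hx ((hmemN x).mp h)
  have hcard : ((indepSets G).filter (fun I => g I = J)).card = 2 ^ A.card + 1 := by
    rw [hfib, Finset.card_insert_of_notMem hvnot,
      Finset.card_image_of_injOn
        (fun S₁ h₁ S₂ h₂ h => hinj S₁ (Finset.mem_coe.mp h₁) S₂ (Finset.mem_coe.mp h₂) h),
      Finset.card_powerset]
  have hsum : ∑ I ∈ (indepSets G).filter (fun I => g I = J),
      (4 * Δ * (if v ∈ I then 1 else 0) + 4 * (I ∩ N).card)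
      = 4 * Δ + 2 * (A.card * 2 ^ A.card) := by
    rw [hfib, Finset.sum_insert hvnot, Finset.sum_image hinj,
      Finset.sum_congr rfl hfS, ← Finset.mul_sum,
      if_pos (Finset.mem_insert_self v J), hcap]
    have h2 := two_mul_sum_powerset_card A
    simp only [Finset.card_empty, mul_zero, mul_one, add_zero]
    congr 1
    rw [← h2]
    ring
  calc (((indepSets G).filter (fun I => g I = J)).card : ℝ) * Real.logb 2 Δ
      = ((2:ℝ) ^ A.card + 1) * Real.logb 2 Δ := by rw [hcard]; push_cast; ring
    _ ≤ 4 * Δ + 2 * A.card * 2 ^ A.card := aks_key_ineq Δ A.card h1 haΔ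
    _ = ((4 * Δ + 2 * (A.card * 2 ^ A.card) : ℕ) : ℝ) := by push_cast; ring
    _ = ∑ I ∈ (indepSets G).filter (fun I => g I = J),
          ((4 * Δ * (if v ∈ I then 1 else 0) + 4 * (I ∩ N).card : ℕ) : ℝ) := by
        rw [← hsum, Nat.cast_sum]

end AKS

/-- Ajtai–Komlós–Szemerédi: a finite triangle-free graph with maximum degree at most
`Δ ≥ 1` satisfies `α(G) ≥ (|V(G)|/(8Δ)) · log₂ Δ`. -/
theorem aks_triangle_free {α : Type*} [Fintype α]
    (G : SimpleGraph α) [DecidableRel G.Adj] (Δ : ℕ) (hΔ : 1 ≤ Δ)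
    (hdeg : ∀ v : α, G.degree v ≤ Δ) (htf : G.CliqueFree 3) :
    (Fintype.card α : ℝ) / (8 * Δ) * Real.logb 2 Δ ≤ indepNum G := by
  classical
  set L := Real.logb 2 (Δ:ℝ) with hL
  have hΔ1 : (1:ℝ) ≤ Δ := by exact_mod_cast hΔ
  have hΔ0 : (0:ℝ) < Δ := by linarith
  have hL0 : 0 ≤ L := Real.logb_nonneg one_lt_two hΔ1
  set n := Fintype.card α with hn
  -- per-`I` bound for the inner sum
  have hinner : ∀ I ∈ indepSets G,
      ∑ v : α, ((4 * Δ * (if v ∈ I then 1 else 0) + 4 * (I ∩ G.neighborFinset v).card : ℕ))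
        ≤ 8 * Δ * I.card := by
    intro I _
    rw [Finset.sum_add_distrib]
    have h1 : ∑ v : α, 4 * Δ * (if v ∈ I then 1 else 0) = 4 * Δ * I.card := by
      rw [← Finset.mul_sum]
      congr 1
      rw [Finset.sum_ite_mem, Finset.univ_inter, Finset.sum_const, smul_eq_mul, mul_one]
    have h2 : ∑ v : α, 4 * (I ∩ G.neighborFinset v).card ≤ 4 * (Δ * I.card) := by
      rw [← Finset.mul_sum]
      apply Nat.mul_le_mul_left
      have hcap : ∀ v : α, (I ∩ G.neighborFinset v).card
          = ∑ u ∈ I, (if G.Adj v u then 1 else 0) := by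
        intro v
        rw [← Finset.card_filter]
        congr 1
        ext x
        simp [SimpleGraph.mem_neighborFinset, and_comm]
      calc ∑ v : α, (I ∩ G.neighborFinset v).card
          = ∑ v : α, ∑ u ∈ I, (if G.Adj v u then 1 else 0) := by
            exact Finset.sum_congr rfl fun v _ => hcap v
        _ = ∑ u ∈ I, ∑ v : α, (if G.Adj v u then 1 else 0) := Finset.sum_comm
        _ = ∑ u ∈ I, G.degree u := by
            apply Finset.sum_congr rfl
            intro u _
            rw [← SimpleGraph.card_neighborFinset_eq_degree, ← Finset.card_filter]
            congr 1
            ext x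
            simp [SimpleGraph.mem_neighborFinset, SimpleGraph.adj_comm]
        _ ≤ ∑ u ∈ I, Δ := Finset.sum_le_sum fun u _ => hdeg u
        _ = Δ * I.card := by rw [Finset.sum_const, smul_eq_mul, mul_comm]
    rw [h1]
    calc 4 * Δ * I.card + ∑ v : α, 4 * (I ∩ G.neighborFinset v).card
        ≤ 4 * Δ * I.card + 4 * (Δ * I.card) := Nat.add_le_add_left h2 _
      _ = 8 * Δ * I.card := by ring
  -- sum the per-vertex bounds
  have hglobal : (n : ℝ) * (((indepSets G).card : ℝ) * L) ≤
      ∑ I ∈ indepSets G, ((8 * Δ * I.card : ℕ) : ℝ) := by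
    calc (n : ℝ) * (((indepSets G).card : ℝ) * L)
        = ∑ _v : α, (((indepSets G).card : ℝ) * L) := by
          rw [Finset.sum_const, Finset.card_univ, nsmul_eq_mul, hn]
      _ ≤ ∑ v : α, ∑ I ∈ indepSets G,
            ((4 * Δ * (if v ∈ I then 1 else 0) + 4 * (I ∩ G.neighborFinset v).card : ℕ) : ℝ) :=
          Finset.sum_le_sum fun v _ => aks_vertex_bound G htf Δ hΔ v (hdeg v)
      _ = ∑ I ∈ indepSets G, ∑ v : α,
            ((4 * Δ * (if v ∈ I then 1 else 0) + 4 * (I ∩ G.neighborFinset v).card : ℕ) : ℝ) :=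
          Finset.sum_comm
      _ ≤ ∑ I ∈ indepSets G, ((8 * Δ * I.card : ℕ) : ℝ) := by
          apply Finset.sum_le_sum
          intro I hI
          rw [← Nat.cast_sum]
          exact_mod_cast hinner I hI
  -- extract a good independent set
  have hne : (indepSets G).Nonempty := ⟨∅, (mem_indepSets G).mpr (by intro u hu; simp at hu)⟩
  have hex : ∃ I ∈ indepSets G, (n : ℝ) * L ≤ ((8 * Δ * I.card : ℕ) : ℝ) := by
    apply Finset.exists_le_of_sum_le hne
    calc ∑ _I ∈ indepSets G, (n : ℝ) * L = ((indepSets G).card : ℝ) * ((n:ℝ) * L) := by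
          rw [Finset.sum_const, nsmul_eq_mul]
      _ = (n : ℝ) * (((indepSets G).card : ℝ) * L) := by ring
      _ ≤ _ := hglobal
  obtain ⟨I, hI, hIbound⟩ := hex
  have hIcard : (I.card : ℝ) ≤ indepNum G := by
    have hmem : I.card ∈ {m | ∃ s : Finset α, IsIndepSet G s ∧ s.card = m} :=
      ⟨I, (mem_indepSets G).mp hI, rfl⟩
    have hbdd : BddAbove {m | ∃ s : Finset α, IsIndepSet G s ∧ s.card = m} := by
      refine ⟨Fintype.card α, ?_⟩
      rintro m ⟨s, _, rfl⟩
      exact Finset.card_le_univ s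
    exact_mod_cast le_csSup hbdd hmem
  push_cast at hIbound
  rw [div_mul_eq_mul_div, div_le_iff₀ (by positivity : (0:ℝ) < 8 * Δ)]
  calc (n : ℝ) * L ≤ 8 * Δ * I.card := hIbound
    _ ≤ (indepNum G) * (8 * Δ) := by nlinarith
end

section
/- Fix n ≥ 1, a permutation σ ∈ S_n with d(id,σ) = s, and integers t, m, r with 0 ≤ m ≤ min(s,t), 0 ≤ r ≤ m, and t − m ≤ n − s. Then the number of permutations τ ∈ S_n such that d(id,τ) = t, |{i : σ(i) ≠ i and τ(i) ≠ i}| = m, and |{i : σ(i) ≠ i, τ(i) ≠ i, σ(i) = τ(i)}| = r is at most C(s,m)·C(m,r)·C(n−s, t−m)·(t−r)!. -/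
/-- The Hamming distance between two permutations: the number of positions where they differ. -/
def permHammingDist {n : ℕ} (σ τ : Equiv.Perm (Fin n)) : ℕ :=
  (Finset.univ.filter fun i => σ i ≠ τ i).card

open Finset in
lemma permHammingDist_one {n : ℕ} (τ : Equiv.Perm (Fin n)) :
    permHammingDist 1 τ = (Finset.univ.filter fun i => τ i ≠ i).card := by
  unfold permHammingDist
  congr 1
  apply Finset.filter_congr
  intro i _
  simp [ne_comm]

/-- Given `σ ∈ S_n` at distance `s` from the identity, the number of permutations `τ`
at distance `t` from the identity sharing exactly `m` deranged positions with `σ`, on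
exactly `r` of which `σ` and `τ` agree, is at most
`C(s,m)·C(m,r)·C(n−s, t−m)·(t−r)!`. -/
theorem count_tau_with_parameters (n : ℕ) (hn : 1 ≤ n) (σ : Equiv.Perm (Fin n))
    (s t m r : ℕ) (hs : permHammingDist 1 σ = s)
    (hms : m ≤ s) (hmt : m ≤ t) (hrm : r ≤ m) (htm : t - m ≤ n - s) :
    (Finset.univ.filter fun τ : Equiv.Perm (Fin n) =>
        permHammingDist 1 τ = t ∧
        (Finset.univ.filter fun i => σ i ≠ i ∧ τ i ≠ i).card = m ∧
        (Finset.univ.filter fun i => σ i ≠ i ∧ τ i ≠ i ∧ σ i = τ i).card = r).card ≤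
      Nat.choose s m * Nat.choose m r * Nat.choose (n - s) (t - m) *
        Nat.factorial (t - r) := by
  classical
  set D : Finset (Fin n) := Finset.univ.filter fun i => σ i ≠ i with hD
  have hDcard : D.card = s := by
    rw [← hs, permHammingDist_one]
  set S : Finset (Equiv.Perm (Fin n)) := Finset.univ.filter fun τ : Equiv.Perm (Fin n) =>
        permHammingDist 1 τ = t ∧
        (Finset.univ.filter fun i => σ i ≠ i ∧ τ i ≠ i).card = m ∧
        (Finset.univ.filter fun i => σ i ≠ i ∧ τ i ≠ i ∧ σ i = τ i).card = r with hS
  set F : Equiv.Perm (Fin n) → Σ _A : Finset (Fin n), Finset (Fin n) × Finset (Fin n) :=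
    fun τ => ⟨Finset.univ.filter fun i => σ i ≠ i ∧ τ i ≠ i,
              (Finset.univ.filter fun i => σ i ≠ i ∧ τ i ≠ i ∧ σ i = τ i,
               Finset.univ.filter fun i => σ i = i ∧ τ i ≠ i)⟩ with hF
  set Q : Finset (Σ _A : Finset (Fin n), Finset (Fin n) × Finset (Fin n)) :=
    (D.powersetCard m).sigma fun A => A.powersetCard r ×ˢ (Dᶜ.powersetCard (t - m)) with hQ
  -- basic facts about members of S
  have hmemS : ∀ τ ∈ S, (Finset.univ.filter fun i => τ i ≠ i).card = t ∧
      (Finset.univ.filter fun i => σ i ≠ i ∧ τ i ≠ i).card = m ∧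
      (Finset.univ.filter fun i => σ i ≠ i ∧ τ i ≠ i ∧ σ i = τ i).card = r := by
    intro τ hτ
    rw [hS, Finset.mem_filter] at hτ
    obtain ⟨-, h1, h2, h3⟩ := hτ
    rw [permHammingDist_one] at h1
    exact ⟨h1, h2, h3⟩
  have hABunion : ∀ τ : Equiv.Perm (Fin n),
      (Finset.univ.filter fun i => σ i ≠ i ∧ τ i ≠ i) ∪
        (Finset.univ.filter fun i => σ i = i ∧ τ i ≠ i) =
      (Finset.univ.filter fun i => τ i ≠ i) := by
    intro τ
    ext i
    simp only [Finset.mem_union, Finset.mem_filter, Finset.mem_univ, true_and]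
    tauto
  have hABdisj : ∀ τ : Equiv.Perm (Fin n),
      Disjoint (Finset.univ.filter fun i => σ i ≠ i ∧ τ i ≠ i)
        (Finset.univ.filter fun i => σ i = i ∧ τ i ≠ i) := by
    intro τ
    rw [Finset.disjoint_left]
    intro i hi hi'
    simp only [Finset.mem_filter] at hi hi'
    exact hi.2.1 hi'.2.1
  -- F maps S into Q
  have hmaps : ∀ τ ∈ S, F τ ∈ Q := by
    intro τ hτ
    obtain ⟨h1, h2, h3⟩ := hmemS τ hτ
    rw [hQ, hF]
    simp only [Finset.mem_sigma, Finset.mem_powersetCard, Finset.mem_product]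
    refine ⟨⟨?_, h2⟩, ⟨?_, h3⟩, ?_, ?_⟩
    · intro i hi
      rw [Finset.mem_filter] at hi
      rw [hD, Finset.mem_filter]
      exact ⟨hi.1, hi.2.1⟩
    · intro i hi
      simp only [Finset.mem_filter] at hi ⊢
      exact ⟨hi.1, hi.2.1, hi.2.2.1⟩
    · intro i hi
      rw [Finset.mem_filter] at hi
      rw [Finset.mem_compl, hD, Finset.mem_filter]
      push_neg
      intro _
      exact hi.2.1
    · have := Finset.card_union_of_disjoint (hABdisj τ)
      rw [hABunion τ, h1, h2] at this
      omega
  -- fiber bound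
  have hfiber : ∀ b ∈ Q, (S.filter fun τ => F τ = b).card ≤ Nat.factorial (t - r) := by
    intro b _
    by_cases hne : (S.filter fun τ => F τ = b).Nonempty
    swap
    · rw [Finset.not_nonempty_iff_eq_empty] at hne
      simp [hne]
    obtain ⟨A, R, B⟩ := b
    obtain ⟨τ₀, hτ₀⟩ := hne
    rw [Finset.mem_filter] at hτ₀
    obtain ⟨hτ₀S, hτ₀F⟩ := hτ₀
    -- equations from F τ = b, for any τ in the fiber
    have hFeq : ∀ τ : Equiv.Perm (Fin n), F τ = ⟨A, (R, B)⟩ →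
        (Finset.univ.filter fun i => σ i ≠ i ∧ τ i ≠ i) = A ∧
        (Finset.univ.filter fun i => σ i ≠ i ∧ τ i ≠ i ∧ σ i = τ i) = R ∧
        (Finset.univ.filter fun i => σ i = i ∧ τ i ≠ i) = B := by
      intro τ h
      rw [hF] at h
      have h1 := congrArg Sigma.fst h
      have h2 := congrArg (fun x : Σ _A : Finset (Fin n), Finset (Fin n) × Finset (Fin n) => x.2) h
      exact ⟨h1, congrArg Prod.fst h2, congrArg Prod.snd h2⟩
    obtain ⟨hA0, hR0, hB0⟩ := hFeq τ₀ hτ₀F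
    obtain ⟨ht0, hm0, hr0⟩ := hmemS τ₀ hτ₀S
    set U : Finset (Fin n) := A ∪ B with hU
    set X : Finset (Fin n) := U \ R with hX
    set Y : Finset (Fin n) := U \ (R.image σ) with hY
    -- supports: for τ in the fiber, U = support of τ
    have hsupp : ∀ τ : Equiv.Perm (Fin n), F τ = ⟨A, (R, B)⟩ →
        ∀ i, τ i ≠ i ↔ i ∈ U := by
      intro τ h i
      obtain ⟨hA, hR, hB⟩ := hFeq τ h
      rw [hU, ← hA, ← hB, hABunion τ]
      simp
    have hRchar : ∀ τ : Equiv.Perm (Fin n), F τ = ⟨A, (R, B)⟩ →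
        ∀ i, i ∈ R ↔ σ i ≠ i ∧ τ i ≠ i ∧ σ i = τ i := by
      intro τ h i
      obtain ⟨hA, hR, hB⟩ := hFeq τ h
      rw [← hR]
      simp
    -- cardinalities
    have hUcard : U.card = t := by
      rw [hU, ← hA0, ← hB0, hABunion τ₀, ht0]
    have hRsubU : R ⊆ U := fun i hi =>
      (hsupp τ₀ hτ₀F i).1 ((hRchar τ₀ hτ₀F i).1 hi).2.1
    have hRcard : R.card = r := by rw [← hR0, hr0]
    have hXcard : X.card = t - r := by
      rw [hX, Finset.card_sdiff_of_subset hRsubU, hUcard, hRcard]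
    have hRimsub : R.image σ ⊆ U := by
      intro j hj
      rw [Finset.mem_image] at hj
      obtain ⟨i, hi, rfl⟩ := hj
      obtain ⟨h1, h2, h3⟩ := (hRchar τ₀ hτ₀F i).1 hi
      rw [← hsupp τ₀ hτ₀F, h3]
      intro hcon
      exact h2 (τ₀.injective hcon)
    have hYcard : Y.card = t - r := by
      rw [hY, Finset.card_sdiff_of_subset hRimsub, hUcard,
        Finset.card_image_of_injective _ σ.injective, hRcard]
    -- injection from the fiber into embeddings X ↪ Y
    have hmemY : ∀ τ : Equiv.Perm (Fin n), F τ = ⟨A, (R, B)⟩ →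
        ∀ x ∈ X, τ x ∈ Y := by
      intro τ h x hx
      rw [hX, Finset.mem_sdiff] at hx
      obtain ⟨hxU, hxR⟩ := hx
      rw [hY, Finset.mem_sdiff]
      constructor
      · rw [← hsupp τ h]
        intro hcon
        have : τ x ≠ x := (hsupp τ h x).2 hxU
        exact this (τ.injective hcon)
      · intro hcon
        rw [Finset.mem_image] at hcon
        obtain ⟨j, hj, hje⟩ := hcon
        obtain ⟨h1, h2, h3⟩ := (hRchar τ h j).1 hj
        rw [h3] at hje
        exact hxR (τ.injective hje ▸ hj)
    have hfc : (S.filter fun τ => F τ = ⟨A, (R, B)⟩).card =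
        Fintype.card {τ // τ ∈ S.filter fun τ => F τ = ⟨A, (R, B)⟩} :=
      (Fintype.card_coe _).symm
    rw [hfc]
    have hcard_emb : Fintype.card ((↥X) ↪ (↥Y)) = Nat.factorial (t - r) := by
      rw [Fintype.card_embedding_eq, Fintype.card_coe, Fintype.card_coe, hXcard, hYcard,
        Nat.descFactorial_self]
    rw [← hcard_emb]
    apply Fintype.card_le_of_injective
      (fun τ => ⟨fun x => ⟨τ.1 x.1, hmemY τ.1 (Finset.mem_filter.1 τ.2).2 x.1 x.2⟩,
        fun x y hxy => Subtype.ext (τ.1.injective (congrArg Subtype.val hxy))⟩)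
    intro τ τ' h
    have hvals : ∀ x : ↥X, τ.1 x.1 = τ'.1 x.1 := by
      intro x
      have := congrFun (congrArg (fun (e : (↥X) ↪ (↥Y)) => (e : ↥X → ↥Y)) h) x
      exact congrArg Subtype.val this
    have hFτ := (Finset.mem_filter.1 τ.2).2
    have hFτ' := (Finset.mem_filter.1 τ'.2).2
    apply Subtype.ext
    apply Equiv.ext
    intro i
    by_cases hiU : i ∈ U
    · by_cases hiR : i ∈ R
      · have h1 := ((hRchar τ.1 hFτ i).1 hiR).2.2
        have h2 := ((hRchar τ'.1 hFτ' i).1 hiR).2.2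
        rw [← h1, ← h2]
      · exact hvals ⟨i, by rw [hX, Finset.mem_sdiff]; exact ⟨hiU, hiR⟩⟩
    · have h1 : ¬ τ.1 i ≠ i := fun hc => hiU ((hsupp τ.1 hFτ i).1 hc)
      have h2 : ¬ τ'.1 i ≠ i := fun hc => hiU ((hsupp τ'.1 hFτ' i).1 hc)
      rw [not_not] at h1 h2
      rw [h1, h2]
  -- cardinality of Q
  have hQcard : Q.card = Nat.choose s m * (Nat.choose m r * Nat.choose (n - s) (t - m)) := by
    rw [hQ, Finset.card_sigma]
    have : ∀ A ∈ D.powersetCard m,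
        (A.powersetCard r ×ˢ (Dᶜ.powersetCard (t - m))).card =
          Nat.choose m r * Nat.choose (n - s) (t - m) := by
      intro A hA
      rw [Finset.mem_powersetCard] at hA
      rw [Finset.card_product, Finset.card_powersetCard, Finset.card_powersetCard, hA.2,
        Finset.card_compl, hDcard, Fintype.card_fin]
    rw [Finset.sum_congr rfl this, Finset.sum_const, Finset.card_powersetCard, hDcard,
      smul_eq_mul]
  calc S.card ≤ Nat.factorial (t - r) * Q.card :=
        Finset.card_le_mul_card_image_of_maps_to hmaps _ hfiber
    _ = Nat.choose s m * Nat.choose m r * Nat.choose (n - s) (t - m) *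
        Nat.factorial (t - r) := by rw [hQcard]; ring
end

section
/- Fix n and d with 1 ≤ d ≤ n, and define g(s,t,m,r) = C(n,s)·D_s·C(s,m)·C(m,r)·C(n−s, t−m)·(t−r)!. Then the number of edges of the subgraph of G_{n,d} induced by the neighborhood of the identity permutation is at most Σ_{s=1}^{d−1} Σ_{t=1}^{d−1} Σ_{m=⌈(s+t−d)/2⌉⁺}^{min(s,t)} Σ_{r=⌈s+t−m−d⌉⁺}^{m} g(s,t,m,r), where ⌈x⌉⁺ denotes the smallest nonnegative integer k with k ≥ x. -/
/-- The graph `G_{n,d}` on `S_n`: two permutations are adjacent iff their Hamming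
distance is between `1` and `d − 1`. -/
def permGraph (n d : ℕ) : SimpleGraph (Equiv.Perm (Fin n)) where
  Adj σ τ := 1 ≤ permHammingDist σ τ ∧ permHammingDist σ τ ≤ d - 1
  symm := by
    constructor
    intro σ τ h
    have key : permHammingDist τ σ = permHammingDist σ τ := by
      unfold permHammingDist
      congr 1
      ext i
      simp [ne_comm]
    rw [key]
    exact h
  loopless := by
    constructor
    intro σ h
    have key : permHammingDist σ σ = 0 := by simp [permHammingDist]
    rw [key] at h
    omega

instance (n d : ℕ) : DecidableRel (permGraph n d).Adj := fun σ τ =>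
  inferInstanceAs (Decidable (1 ≤ permHammingDist σ τ ∧ permHammingDist σ τ ≤ d - 1))

/-- The number of edges of the subgraph of `G` induced by the neighborhood of `v`,
i.e. the number of edges of `G` both of whose endpoints are adjacent to `v`. -/
def nbrEdges {α : Type*} [Fintype α] [DecidableEq α]
    (G : SimpleGraph α) [DecidableRel G.Adj] (v : α) : ℕ :=
  (G.edgeFinset.filter fun e => ∀ x ∈ e, G.Adj v x).card

/-- The counting function `g(s,t,m,r) = C(n,s)·D_s·C(s,m)·C(m,r)·C(n−s,t−m)·(t−r)!`. -/
def g (n s t m r : ℕ) : ℕ :=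
  Nat.choose n s * numDerangements s * Nat.choose s m * Nat.choose m r *
    Nat.choose (n - s) (t - m) * Nat.factorial (t - r)

open Finset

section Helpers

/-- Encode a member of a finset of size `≤ k` as an element of `Fin k`. -/
noncomputable def encMemLe {α : Type*} (F : Finset α) {k : ℕ} (h : F.card ≤ k) (x : α)
    (hx : x ∈ F) : Fin k :=
  Fin.castLE (le_trans (Fintype.card_coe F).le h) ((Fintype.equivFin ↥F) ⟨x, hx⟩)

lemma encMemLe_inj {α : Type*} {F₁ F₂ : Finset α} {k : ℕ} {h₁ : F₁.card ≤ k} {h₂ : F₂.card ≤ k}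
    {x y : α} {hx : x ∈ F₁} {hy : y ∈ F₂} (hF : F₁ = F₂)
    (h : encMemLe F₁ h₁ x hx = encMemLe F₂ h₂ y hy) : x = y := by
  subst hF
  have h' : (Fintype.equivFin ↥F₁) ⟨x, hx⟩ = (Fintype.equivFin ↥F₁) ⟨y, hy⟩ := by
    apply Fin.ext
    simpa [encMemLe, Fin.ext_iff] using h
  have := (Fintype.equivFin ↥F₁).injective h'
  exact congrArg Subtype.val this

lemma permHammingDist_one_s15 {n : ℕ} (σ : Equiv.Perm (Fin n)) : permHammingDist 1 σ = σ.support.card := by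
  unfold permHammingDist
  congr 1
  ext i
  exact ⟨fun h => Equiv.Perm.mem_support.mpr (Ne.symm (Finset.mem_filter.mp h).2),
    fun h => Finset.mem_filter.mpr ⟨Finset.mem_univ _, Ne.symm (Equiv.Perm.mem_support.mp h)⟩⟩

lemma key_set {n : ℕ} (σ τ : Equiv.Perm (Fin n)) :
    (univ.filter fun i => σ i ≠ τ i) =
      (σ.support ∪ τ.support) \ ((σ.support ∩ τ.support).filter fun i => σ i = τ i) := by
  ext i
  simp only [mem_filter, mem_univ, true_and, mem_sdiff, mem_union, mem_inter,
    Equiv.Perm.mem_support]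
  by_cases h1 : σ i = i <;> by_cases h2 : τ i = i <;> simp [h1, h2] <;> tauto

lemma dist_formula {n : ℕ} (σ τ : Equiv.Perm (Fin n)) :
    permHammingDist σ τ + ((σ.support ∩ τ.support).filter fun i => σ i = τ i).card
      + (σ.support ∩ τ.support).card = σ.support.card + τ.support.card := by
  have hsub : ((σ.support ∩ τ.support).filter fun i => σ i = τ i) ⊆ σ.support ∪ τ.support :=
    (filter_subset _ _).trans inter_subset_union
  rw [permHammingDist, key_set, card_sdiff_of_subset hsub, Nat.sub_add_cancel (card_le_card hsub),
    card_union_add_card_inter]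


lemma card_support_filter_le {n : ℕ} (S : Finset (Fin n)) :
    (univ.filter fun π : Equiv.Perm (Fin n) => π.support = S).card ≤ numDerangements S.card := by
  classical
  rw [← Fintype.card_coe]
  have hcard : Fintype.card (derangements ↥S) = numDerangements S.card := by
    rw [card_derangements_eq_numDerangements, Fintype.card_coe]
  rw [← hcard]
  have hmem : ∀ (π : Equiv.Perm (Fin n)), π.support = S → ∀ x : Fin n, x ∈ S ↔ π x ∈ S := by
    intro π hπ x
    rw [← hπ]
    exact Equiv.Perm.apply_mem_support.symm
  refine Fintype.card_le_of_injective
    (fun q => ⟨q.1.subtypePerm (fun x => (hmem q.1 (mem_filter.mp q.2).2 x).symm),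
      fun x => by
        have hx : (x : Fin n) ∈ q.1.support := by
          have := (mem_filter.mp q.2).2; rw [this]; exact x.2
        intro hcontra
        have : q.1 (x : Fin n) = x := congrArg Subtype.val hcontra
        exact (Equiv.Perm.mem_support.mp hx) this⟩) ?_
  intro q₁ q₂ h
  have h' := congrArg Subtype.val h
  simp only at h'
  apply Subtype.ext
  apply Equiv.ext; intro j
  by_cases hj : j ∈ S
  · have := congrArg (fun (e : Equiv.Perm ↥S) => (e ⟨j, hj⟩ : Fin n)) h'
    simpa [Equiv.Perm.subtypePerm_apply] using this
  · have e1 : q₁.1 j = j := by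
      have := (mem_filter.mp q₁.2).2
      exact Equiv.Perm.notMem_support.mp (by rw [this]; exact hj)
    have e2 : q₂.1 j = j := by
      have := (mem_filter.mp q₂.2).2
      exact Equiv.Perm.notMem_support.mp (by rw [this]; exact hj)
    rw [e1, e2]

lemma card_perm_filter_le {n : ℕ} (σ : Equiv.Perm (Fin n)) (U B : Finset (Fin n))
    (hB : B ⊆ U) (him : Finset.image σ B ⊆ U) :
    (univ.filter fun π : Equiv.Perm (Fin n) => π.support = U ∧ ∀ i ∈ B, π i = σ i).card ≤
      Nat.factorial (U.card - B.card) := by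
  classical
  set K := U \ B with hK
  set V := U \ Finset.image σ B with hV
  have hKcard : K.card = U.card - B.card := card_sdiff_of_subset hB
  have hVcard : V.card = U.card - B.card := by
    rw [hV, card_sdiff_of_subset him, Finset.card_image_of_injective _ σ.injective]
  rw [← Fintype.card_coe]
  have hle : Fintype.card (↥K ↪ ↥V) = Nat.factorial (U.card - B.card) := by
    rw [Fintype.card_embedding_eq, Fintype.card_coe, Fintype.card_coe, hKcard, hVcard,
      Nat.descFactorial_self]
  rw [← hle]
  refine Fintype.card_le_of_injective (fun q => ⟨fun x => ⟨q.1 x, ?_⟩, ?_⟩) ?_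
  · -- q.1 x ∈ V
    obtain ⟨hsupp, hagree⟩ := (mem_filter.mp q.2).2
    have hxU : (x : Fin n) ∈ U := (sdiff_subset) x.2
    have hxB : (x : Fin n) ∉ B := (Finset.mem_sdiff.mp x.2).2
    refine Finset.mem_sdiff.mpr ⟨?_, ?_⟩
    · have hm : q.1 ((x : Fin n)) ∈ (q.1 : Equiv.Perm (Fin n)).support :=
        Equiv.Perm.apply_mem_support.mpr (by rw [hsupp]; exact hxU)
      rwa [hsupp] at hm
    · intro hcontra
      obtain ⟨b, hb, hbe⟩ := Finset.mem_image.mp hcontra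
      have : q.1 (x : Fin n) = q.1 b := by rw [hagree b hb]; exact hbe.symm
      exact hxB (by rwa [q.1.injective this])
  · intro a b hab
    have := congrArg Subtype.val hab
    exact Subtype.ext (q.1.injective this)
  · intro q₁ q₂ h
    obtain ⟨hsupp₁, hagree₁⟩ := (mem_filter.mp q₁.2).2
    obtain ⟨hsupp₂, hagree₂⟩ := (mem_filter.mp q₂.2).2
    apply Subtype.ext
    apply Equiv.ext; intro j
    by_cases hjU : j ∈ U
    · by_cases hjB : j ∈ B
      · rw [hagree₁ j hjB, hagree₂ j hjB]
      · have hjK : j ∈ K := Finset.mem_sdiff.mpr ⟨hjU, hjB⟩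
        have := congrArg (fun (f : ↥K ↪ ↥V) => (f ⟨j, hjK⟩ : Fin n)) h
        exact this
    · have e1 : q₁.1 j = j := Equiv.Perm.notMem_support.mp (by rw [hsupp₁]; exact hjU)
      have e2 : q₂.1 j = j := Equiv.Perm.notMem_support.mp (by rw [hsupp₂]; exact hjU)
      rw [e1, e2]

lemma union_eq {n : ℕ} (σ τ : Equiv.Perm (Fin n)) :
    (σ.support ∩ τ.support) ∪ (τ.support \ σ.support) = τ.support := by
  ext i; simp only [mem_union, mem_inter, mem_sdiff]; tauto

noncomputable def encodePair (n s t m r : ℕ) (σ τ : Equiv.Perm (Fin n))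
    (hs : σ.support.card = s) (ht : τ.support.card = t)
    (hm : (σ.support ∩ τ.support).card = m)
    (hr : ((σ.support ∩ τ.support).filter fun i => σ i = τ i).card = r) :
    Fin (Nat.choose n s) × Fin (numDerangements s) × Fin (Nat.choose s m) ×
      Fin (Nat.choose m r) × Fin (Nat.choose (n - s) (t - m)) ×
      Fin (Nat.factorial (t - r)) :=
  ⟨encMemLe (Finset.univ.powersetCard s) (by simp) σ.support
      (by simp [Finset.mem_powersetCard, hs]),
   encMemLe (Finset.univ.filter fun π : Equiv.Perm (Fin n) => π.support = σ.support)
      (by simpa [hs] using card_support_filter_le σ.support) σ (by simp),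
   encMemLe (σ.support.powersetCard m) (by simp [hs]) (σ.support ∩ τ.support)
      (by simp [Finset.mem_powersetCard, hm, Finset.inter_subset_left]),
   encMemLe ((σ.support ∩ τ.support).powersetCard r) (by simp [hm])
      ((σ.support ∩ τ.support).filter fun i => σ i = τ i)
      (by simp [Finset.mem_powersetCard, hr, Finset.filter_subset]),
   encMemLe ((σ.support)ᶜ.powersetCard (t - m)) (by simp [Finset.card_compl, hs])
      (τ.support \ σ.support)
      (by
        rw [Finset.mem_powersetCard]
        refine ⟨fun i hi => ?_, ?_⟩
        · rw [Finset.mem_compl]; exact (Finset.mem_sdiff.mp hi).2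
        · rw [← Finset.sdiff_inter_self_left τ.support σ.support, Finset.inter_comm]
          rw [Finset.card_sdiff_of_subset Finset.inter_subset_right, ht, hm]),
   encMemLe (Finset.univ.filter fun π : Equiv.Perm (Fin n) =>
        π.support = (σ.support ∩ τ.support) ∪ (τ.support \ σ.support) ∧
          ∀ i ∈ ((σ.support ∩ τ.support).filter fun i => σ i = τ i), π i = σ i)
      (by
        have hB : ((σ.support ∩ τ.support).filter fun i => σ i = τ i) ⊆
            (σ.support ∩ τ.support) ∪ (τ.support \ σ.support) :=
          (Finset.filter_subset _ _).trans Finset.subset_union_left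
        have him : Finset.image σ ((σ.support ∩ τ.support).filter fun i => σ i = τ i) ⊆
            (σ.support ∩ τ.support) ∪ (τ.support \ σ.support) := by
          rw [union_eq]
          intro y hy
          obtain ⟨b, hb, rfl⟩ := Finset.mem_image.mp hy
          obtain ⟨hbA, hbe⟩ := Finset.mem_filter.mp hb
          rw [hbe]
          exact Equiv.Perm.apply_mem_support.mpr (Finset.mem_inter.mp hbA).2
        refine le_trans (card_perm_filter_le σ _ _ hB him) ?_
        rw [union_eq, ht, hr])
      τ
      (by
        rw [Finset.mem_filter]
        refine ⟨Finset.mem_univ _, (union_eq σ τ).symm, fun i hi => ?_⟩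
        exact ((Finset.mem_filter.mp hi).2).symm)⟩

lemma encodePair_inj {n s t m r : ℕ} {σ₁ τ₁ σ₂ τ₂ : Equiv.Perm (Fin n)}
    {hs₁ : σ₁.support.card = s} {ht₁ : τ₁.support.card = t}
    {hm₁ : (σ₁.support ∩ τ₁.support).card = m}
    {hr₁ : ((σ₁.support ∩ τ₁.support).filter fun i => σ₁ i = τ₁ i).card = r}
    {hs₂ : σ₂.support.card = s} {ht₂ : τ₂.support.card = t}
    {hm₂ : (σ₂.support ∩ τ₂.support).card = m}
    {hr₂ : ((σ₂.support ∩ τ₂.support).filter fun i => σ₂ i = τ₂ i).card = r}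
    (h : encodePair n s t m r σ₁ τ₁ hs₁ ht₁ hm₁ hr₁ =
      encodePair n s t m r σ₂ τ₂ hs₂ ht₂ hm₂ hr₂) : σ₁ = σ₂ ∧ τ₁ = τ₂ := by
  unfold encodePair at h
  simp only [Prod.mk.injEq] at h
  obtain ⟨h1, h2, h3, h4, h5, h6⟩ := h
  have hS : σ₁.support = σ₂.support := encMemLe_inj rfl h1
  have hσ : σ₁ = σ₂ := encMemLe_inj (by rw [hS]) h2
  have hA : σ₁.support ∩ τ₁.support = σ₂.support ∩ τ₂.support := encMemLe_inj (by rw [hS]) h3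
  have hB : ((σ₁.support ∩ τ₁.support).filter fun i => σ₁ i = τ₁ i) =
      ((σ₂.support ∩ τ₂.support).filter fun i => σ₂ i = τ₂ i) := encMemLe_inj (by rw [hA]) h4
  have hC : τ₁.support \ σ₁.support = τ₂.support \ σ₂.support := encMemLe_inj (by rw [hS]) h5
  have hτ : τ₁ = τ₂ := encMemLe_inj (by rw [hB, hA, hC, hσ]) h6
  exact ⟨hσ, hτ⟩

lemma count_le {n s t m r : ℕ} (Q : Finset (Equiv.Perm (Fin n) × Equiv.Perm (Fin n)))
    (hQ : ∀ p ∈ Q, p.1.support.card = s ∧ p.2.support.card = t ∧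
      (p.1.support ∩ p.2.support).card = m ∧
      ((p.1.support ∩ p.2.support).filter fun i => p.1 i = p.2 i).card = r) :
    Q.card ≤ g n s t m r := by
  classical
  rw [← Fintype.card_coe]
  have hprod : Fintype.card (Fin (Nat.choose n s) × Fin (numDerangements s) ×
      Fin (Nat.choose s m) × Fin (Nat.choose m r) × Fin (Nat.choose (n - s) (t - m)) ×
      Fin (Nat.factorial (t - r))) = g n s t m r := by
    simp [g]; ring
  rw [← hprod]
  refine Fintype.card_le_of_injective (fun q => encodePair n s t m r q.1.1 q.1.2
    (hQ q.1 q.2).1 (hQ q.1 q.2).2.1 (hQ q.1 q.2).2.2.1 (hQ q.1 q.2).2.2.2) ?_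
  intro q₁ q₂ h
  obtain ⟨hσ, hτ⟩ := encodePair_inj h
  exact Subtype.ext (Prod.ext hσ hτ)


end Helpers

/-- The number of edges of the subgraph of `G_{n,d}` induced by the neighborhood of the
identity permutation is at most
`Σ_{s=1}^{d−1} Σ_{t=1}^{d−1} Σ_{m=⌈(s+t−d)/2⌉⁺}^{min(s,t)} Σ_{r=⌈s+t−m−d⌉⁺}^{m} g(s,t,m,r)`,
where `⌈x⌉⁺` is the smallest nonnegative integer `k ≥ x` (here realized via truncated
natural subtraction, so that `⌈(s+t−d)/2⌉⁺ = (s+t−d+1)/2` and `⌈s+t−m−d⌉⁺ = s+t−m−d`). -/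
theorem nbrEdges_identity_le_sum (n d : ℕ) (hd : 1 ≤ d) (hdn : d ≤ n) :
    nbrEdges (permGraph n d) 1 ≤
      ∑ s ∈ Finset.Icc 1 (d - 1), ∑ t ∈ Finset.Icc 1 (d - 1),
        ∑ m ∈ Finset.Icc ((s + t - d + 1) / 2) (min s t),
          ∑ r ∈ Finset.Icc (s + t - m - d) m, g n s t m r := by
  classical
  set P : Finset (Equiv.Perm (Fin n) × Equiv.Perm (Fin n)) :=
    univ.filter fun p => (permGraph n d).Adj p.1 p.2 ∧ (permGraph n d).Adj 1 p.1 ∧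
      (permGraph n d).Adj 1 p.2 with hPdef
  have hPmem : ∀ p ∈ P, (permGraph n d).Adj p.1 p.2 ∧ (permGraph n d).Adj 1 p.1 ∧
      (permGraph n d).Adj 1 p.2 := fun p hp => (mem_filter.mp hp).2
  -- Step 1 : edges inject into ordered pairs
  have step1 : nbrEdges (permGraph n d) 1 ≤ P.card := by
    unfold nbrEdges
    refine Finset.card_le_card_of_injOn (fun e => Quot.out e) ?_ ?_
    · intro e he
      obtain ⟨he1, he2⟩ := mem_filter.mp he
      rw [SimpleGraph.mem_edgeFinset] at he1
      have hout : s((Quot.out e).1, (Quot.out e).2) = e := by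
        exact Quot.out_eq e
      refine Finset.mem_coe.mpr (mem_filter.mpr ?_)
      exact ⟨mem_univ _, (SimpleGraph.mem_edgeSet _).mp (by rw [hout]; exact he1),
        he2 _ (Sym2.out_fst_mem e), he2 _ (Sym2.out_snd_mem e)⟩
    · intro e₁ _ e₂ _ h
      have := congrArg (Quot.mk (Sym2.Rel (Equiv.Perm (Fin n)))) h
      rwa [Quot.out_eq, Quot.out_eq] at this
  refine le_trans step1 ?_
  -- Step 2 : fiberwise decomposition
  have adj_iff : ∀ σ τ : Equiv.Perm (Fin n), (permGraph n d).Adj σ τ ↔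
      1 ≤ permHammingDist σ τ ∧ permHammingDist σ τ ≤ d - 1 := fun _ _ => Iff.rfl
  have memb1 : ∀ p ∈ P, p.1.support.card ∈ Finset.Icc 1 (d - 1) := by
    intro p hp
    obtain ⟨-, h1, -⟩ := hPmem p hp
    rw [adj_iff, permHammingDist_one_s15] at h1
    exact mem_Icc.mpr h1
  rw [Finset.card_eq_sum_card_fiberwise memb1]
  refine Finset.sum_le_sum ?_
  intro s hs
  have memb2 : ∀ p ∈ P.filter (fun p => p.1.support.card = s),
      p.2.support.card ∈ Finset.Icc 1 (d - 1) := by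
    intro p hp
    obtain ⟨-, -, h2⟩ := hPmem p (mem_filter.mp hp).1
    rw [adj_iff, permHammingDist_one_s15] at h2
    exact mem_Icc.mpr h2
  rw [Finset.card_eq_sum_card_fiberwise memb2]
  refine Finset.sum_le_sum ?_
  intro t ht
  have memb3 : ∀ p ∈ (P.filter (fun p => p.1.support.card = s)).filter
      (fun p => p.2.support.card = t),
      (p.1.support ∩ p.2.support).card ∈ Finset.Icc ((s + t - d + 1) / 2) (min s t) := by
    intro p hp
    obtain ⟨hp', hpt⟩ := mem_filter.mp hp
    obtain ⟨hpP, hps⟩ := mem_filter.mp hp'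
    obtain ⟨hadj, -, -⟩ := hPmem p hpP
    rw [adj_iff] at hadj
    have hform := dist_formula p.1 p.2
    have hrm : ((p.1.support ∩ p.2.support).filter fun i => p.1 i = p.2 i).card ≤
        (p.1.support ∩ p.2.support).card := card_le_card (filter_subset _ _)
    have h1 : (p.1.support ∩ p.2.support).card ≤ s := by
      rw [← hps]; exact card_le_card inter_subset_left
    have h2 : (p.1.support ∩ p.2.support).card ≤ t := by
      rw [← hpt]; exact card_le_card inter_subset_right
    rw [mem_Icc]
    rw [hps, hpt] at hform
    omega
  rw [Finset.card_eq_sum_card_fiberwise memb3]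
  refine Finset.sum_le_sum ?_
  intro m hm
  have memb4 : ∀ p ∈ ((P.filter (fun p => p.1.support.card = s)).filter
      (fun p => p.2.support.card = t)).filter
      (fun p => (p.1.support ∩ p.2.support).card = m),
      ((p.1.support ∩ p.2.support).filter fun i => p.1 i = p.2 i).card ∈
        Finset.Icc (s + t - m - d) m := by
    intro p hp
    obtain ⟨hp', hpm⟩ := mem_filter.mp hp
    obtain ⟨hp'', hpt⟩ := mem_filter.mp hp'
    obtain ⟨hpP, hps⟩ := mem_filter.mp hp''
    obtain ⟨hadj, -, -⟩ := hPmem p hpP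
    rw [adj_iff] at hadj
    have hform := dist_formula p.1 p.2
    have hrm : ((p.1.support ∩ p.2.support).filter fun i => p.1 i = p.2 i).card ≤
        (p.1.support ∩ p.2.support).card := card_le_card (filter_subset _ _)
    rw [mem_Icc]
    rw [hps, hpt, hpm] at hform
    rw [hpm] at hrm
    omega
  rw [Finset.card_eq_sum_card_fiberwise memb4]
  refine Finset.sum_le_sum ?_
  intro r hr
  refine count_le _ ?_
  intro p hp
  obtain ⟨hp', hpr⟩ := mem_filter.mp hp
  obtain ⟨hp'', hpm⟩ := mem_filter.mp hp'
  obtain ⟨hp''', hpt⟩ := mem_filter.mp hp''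
  obtain ⟨-, hps⟩ := mem_filter.mp hp'''
  exact ⟨hps, hpt, hpm, hpr⟩
end

section
/- (Lemma 7.) Fix a real δ with 0 < δ < 1/2 and a real ε with 0 < ε < 1/6. Define g(s,t,m,r) = C(n,s)·D_s·C(s,m)·C(m,r)·C(n−s, t−m)·(t−r)!. Then there exists N such that for all n ≥ N for which d := δ·n is a positive integer, and for all integers s,t,m,r satisfying 1 ≤ s ≤ d, 1 ≤ t ≤ d, ⌈(s+t−d)/2⌉⁺ ≤ m ≤ min(s,t), and ⌈s+t−m−d⌉⁺ ≤ r ≤ m, one has g(s,t,m,r) ≤ g(d,d,d,0) · 2^{3·n·h₂(3ε)}, where h₂(x) = −x·log₂ x − (1−x)·log₂(1−x) is the binary entropy function. -/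
/-- The binary entropy function `h₂(x) = −x·log₂ x − (1−x)·log₂(1−x)`. -/
noncomputable def binEntropy (x : ℝ) : ℝ :=
  -x * Real.logb 2 x - (1 - x) * Real.logb 2 (1 - x)

section AuxNat
open Nat


-- D_{j+1} ≥ j * D_j for j ≥ 1
lemma derange_step (j : ℕ) (hj : 1 ≤ j) :
    j * numDerangements j ≤ numDerangements (j + 1) := by
  obtain ⟨i, rfl⟩ := Nat.exists_eq_add_of_le hj
  cases i with
  | zero => simp [numDerangements]
  | succ i =>
      have h := numDerangements_add_two i
      have : 1 + (i+1) = i + 2 := by omega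
      rw [this]
      have h2 : (i + 2) + 1 = i + 1 + 2 := by omega
      rw [show (i+2)+1 = (i+1)+2 from rfl, numDerangements_add_two (i+1)]
      calc (i + 2) * numDerangements (i + 2)
          ≤ (i + 2) * (numDerangements (i+1) + numDerangements (i + 2)) := by
            exact Nat.mul_le_mul_left _ (Nat.le_add_left _ _)
        _ = _ := rfl

-- D_s * (s-1+i)! ≤ D_{s+i} * (s-1)!
lemma derange_ratio (s : ℕ) (hs : 1 ≤ s) : ∀ i : ℕ,
    numDerangements s * (s - 1 + i)! ≤ numDerangements (s + i) * (s - 1)! := by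
  intro i
  induction i with
  | zero => simp
  | succ i ih =>
      have hstep := derange_step (s + i) (by omega)
      have e1 : s - 1 + (i+1) = (s - 1 + i) + 1 := by omega
      rw [e1, Nat.factorial_succ]
      have e2 : s - 1 + i + 1 = s + i := by omega
      rw [e2]
      calc numDerangements s * ((s + i) * (s - 1 + i)!)
          = (s + i) * (numDerangements s * (s - 1 + i)!) := by ring
        _ ≤ (s + i) * (numDerangements (s + i) * (s - 1)!) := Nat.mul_le_mul_left _ ih
        _ = ((s + i) * numDerangements (s + i)) * (s - 1)! := by ring
        _ ≤ numDerangements (s + i + 1) * (s - 1)! := Nat.mul_le_mul_right _ hstep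

lemma fact_mul_pow_le (x : ℕ) : ∀ i : ℕ, x ! * x ^ i ≤ (x + i)! := by
  intro i
  induction i with
  | zero => simp
  | succ i ih =>
      rw [pow_succ, show x + (i+1) = (x + i) + 1 from rfl, Nat.factorial_succ]
      calc x ! * (x ^ i * x) = (x ! * x ^ i) * x := by ring
        _ ≤ (x + i)! * x := Nat.mul_le_mul_right _ ih
        _ ≤ (x + i)! * (x + i + 1) := Nat.mul_le_mul_left _ (by omega)
        _ = (x + i + 1) * (x + i)! := by ring

lemma fact_le_fact_mul_pow {x y : ℕ} : ∀ i : ℕ, x + i ≤ y → (x + i)! ≤ x ! * y ^ i := by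
  intro i
  induction i with
  | zero => simp
  | succ i ih =>
      intro h
      rw [show x + (i+1) = (x + i) + 1 from rfl, Nat.factorial_succ, pow_succ]
      calc (x + i + 1) * (x + i)! ≤ y * (x ! * y ^ i) := by
            exact Nat.mul_le_mul (by omega) (ih (by omega))
        _ = x ! * (y ^ i * y) := by ring

lemma two_pow_le_two_mul_fact (a : ℕ) : 2 ^ a ≤ 2 * a ! := by
  induction a with
  | zero => simp
  | succ a ih =>
      cases a with
      | zero => norm_num
      | succ b =>
          rw [pow_succ, Nat.factorial_succ]
          calc 2 ^ (b+1) * 2 ≤ 2 * (b+1)! * 2 := Nat.mul_le_mul_right _ ih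
            _ = 2 * (2 * (b+1)!) := by ring
            _ ≤ 2 * ((b+1+1) * (b+1)!) :=
                Nat.mul_le_mul_left _ (Nat.mul_le_mul_right _ (by omega))

-- choose * factorial ≤ pow
lemma choose_mul_fact_le_pow (x a : ℕ) : Nat.choose x a * a ! ≤ x ^ a := by
  rw [mul_comm, ← Nat.descFactorial_eq_factorial_mul_choose]
  exact Nat.descFactorial_le_pow x a


lemma sqrt_cube_ge (n : ℕ) (hn : 9 ≤ n) : n ≤ (Nat.sqrt n) ^ 3 := by
  have hq2 : Nat.sqrt n * Nat.sqrt n ≤ n := Nat.sqrt_le n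
  have hq3 : n < (Nat.sqrt n + 1) * (Nat.sqrt n + 1) := Nat.lt_succ_sqrt n
  have hq : 3 ≤ Nat.sqrt n := by
    by_contra h
    push_neg at h
    interval_cases h' : Nat.sqrt n <;> omega
  nlinarith [hq, hq3]

lemma K_cube (n : ℕ) (hn : 9 ≤ n) :
    n ^ 2 ≤ (Nat.sqrt (n * Nat.sqrt n) + 1) ^ 3 := by
  set q := Nat.sqrt n with hq
  set K := Nat.sqrt (n * q) with hK
  have h1 : n * q < (K + 1) * (K + 1) := Nat.lt_succ_sqrt (n * q)
  have h2 : n ≤ q ^ 3 := sqrt_cube_ge n hn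
  have h6 : (n ^ 2) ^ 2 ≤ ((K + 1) ^ 3) ^ 2 := by
    calc (n ^ 2) ^ 2 = n ^ 3 * n := by ring
      _ ≤ n ^ 3 * q ^ 3 := Nat.mul_le_mul_left _ h2
      _ = (n * q) ^ 3 := by ring
      _ ≤ ((K + 1) * (K + 1)) ^ 3 := Nat.pow_le_pow_left (le_of_lt h1) 3
      _ = ((K + 1) ^ 3) ^ 2 := by ring
  exact (Nat.pow_le_pow_iff_left (by norm_num)).mp h6

lemma pow_le_fact_cube (n : ℕ) (hn : 9 ≤ n) (k : ℕ) :
    n ^ (2 * k) ≤ (k !) ^ 3 * n ^ (2 * Nat.sqrt (n * Nat.sqrt n)) := by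
  set K := Nat.sqrt (n * Nat.sqrt n) with hK
  have hn1 : 1 ≤ n := by omega
  rcases le_or_gt k K with h | h
  · calc n ^ (2 * k) ≤ n ^ (2 * K) := Nat.pow_le_pow_right hn1 (by omega)
      _ ≤ (k !) ^ 3 * n ^ (2 * K) := Nat.le_mul_of_pos_left _ (by positivity)
  · obtain ⟨j, rfl⟩ := Nat.exists_eq_add_of_le (le_of_lt h)
    clear h
    induction j with
    | zero => simpa using Nat.le_mul_of_pos_left _ (show 0 < (K !)^3 by positivity)
    | succ j ih =>
        have hcube : n ^ 2 ≤ (K + j + 1) ^ 3 := by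
          calc n ^ 2 ≤ (K + 1) ^ 3 := K_cube n hn
            _ ≤ (K + j + 1) ^ 3 := Nat.pow_le_pow_left (by omega) 3
        calc n ^ (2 * (K + (j + 1))) = n ^ (2 * (K + j)) * n ^ 2 := by
              rw [← pow_add]; ring_nf
          _ ≤ (K + j)! ^ 3 * n ^ (2 * K) * n ^ 2 := Nat.mul_le_mul_right _ ih
          _ ≤ (K + j)! ^ 3 * n ^ (2 * K) * (K + j + 1) ^ 3 := Nat.mul_le_mul_left _ hcube
          _ = ((K + j + 1) * (K + j)!) ^ 3 * n ^ (2 * K) := by ring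
          _ = (K + (j + 1))! ^ 3 * n ^ (2 * K) := by
              rw [show K + (j+1) = (K + j) + 1 from rfl, Nat.factorial_succ]
lemma g_diag (n d : ℕ) : g n d d d 0 = Nat.choose n d * numDerangements d * d ! := by
  simp [g]

lemma main_bound (n d s t m r : ℕ)
    (hd1 : 1 ≤ d) (h2d : 2 * d ≤ n) (hn9 : 9 ≤ n)
    (hs1 : 1 ≤ s) (hsd : s ≤ d) (ht1 : 1 ≤ t) (htd : t ≤ d)
    (hms : m ≤ s) (hmt : m ≤ t)
    (hr : s + t ≤ m + d + r) (hrm : r ≤ m) :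
    g n s t m r ≤ g n d d d 0 * (2 * d * n ^ (2 * Nat.sqrt (n * Nat.sqrt n))) := by
  set K := Nat.sqrt (n * Nat.sqrt n) with hK
  have hdn : d ≤ n := by omega
  have hsn : s ≤ n := by omega
  have hrt : r ≤ t := le_trans hrm hmt
  -- F1
  have F1 : numDerangements s * (d - 1)! ≤ numDerangements d * (s - 1)! := by
    have h := derange_ratio s hs1 (d - s)
    rwa [show s - 1 + (d - s) = d - 1 by omega, show s + (d - s) = d by omega] at h
  -- F2
  have F2 : Nat.choose n s * s ! * (n - d) ^ (d - s) ≤ Nat.choose n d * d ! := by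
    have e1 : Nat.choose n s * s ! * (n - s)! = n ! :=
      Nat.choose_mul_factorial_mul_factorial hsn
    have e2 : Nat.choose n d * d ! * (n - d)! = n ! :=
      Nat.choose_mul_factorial_mul_factorial hdn
    have e3 : (n - d)! * (n - d) ^ (d - s) ≤ (n - s)! := by
      have h := fact_mul_pow_le (n - d) (d - s)
      rwa [show n - d + (d - s) = n - s by omega] at h
    have h4 : Nat.choose n s * s ! * (n - d) ^ (d - s) * (n - d)! ≤
        Nat.choose n d * d ! * (n - d)! := by
      calc Nat.choose n s * s ! * (n - d) ^ (d - s) * (n - d)!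
          = Nat.choose n s * s ! * ((n - d)! * (n - d) ^ (d - s)) := by ring
        _ ≤ Nat.choose n s * s ! * (n - s)! := Nat.mul_le_mul_left _ e3
        _ = n ! := e1
        _ = Nat.choose n d * d ! * (n - d)! := e2.symm
    exact Nat.le_of_mul_le_mul_right h4 (Nat.factorial_pos _)
  -- F3
  have F3 : Nat.choose m r * r ! * (t - r)! ≤ t ! := by
    calc Nat.choose m r * r ! * (t - r)!
        ≤ Nat.choose t r * r ! * (t - r)! :=
          Nat.mul_le_mul_right _ (Nat.mul_le_mul_right _ (Nat.choose_le_choose r hmt))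
      _ = t ! := Nat.choose_mul_factorial_mul_factorial hrt
  -- dagger
  have dagger : g n s t m r * (s ! * (n - d) ^ (d - s) * (d - 1)! * r !) ≤
      (Nat.choose n d * numDerangements d * d !) *
        ((s - 1)! * (t ! * (Nat.choose s m * Nat.choose (n - s) (t - m)))) := by
    simp only [g]
    calc Nat.choose n s * numDerangements s * Nat.choose s m * Nat.choose m r *
          Nat.choose (n - s) (t - m) * (t - r)! *
          (s ! * (n - d) ^ (d - s) * (d - 1)! * r !)
        = (Nat.choose n s * s ! * (n - d) ^ (d - s)) *
          ((numDerangements s * (d - 1)!) *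
            ((Nat.choose m r * r ! * (t - r)!) *
              (Nat.choose s m * Nat.choose (n - s) (t - m)))) := by ring
      _ ≤ (Nat.choose n d * d !) *
          ((numDerangements d * (s - 1)!) *
            (t ! * (Nat.choose s m * Nat.choose (n - s) (t - m)))) :=
          Nat.mul_le_mul F2 (Nat.mul_le_mul F1 (Nat.mul_le_mul_right _ F3))
      _ = (Nat.choose n d * numDerangements d * d !) *
          ((s - 1)! * (t ! * (Nat.choose s m * Nat.choose (n - s) (t - m)))) := by ring
  rw [g_diag]
  set G := Nat.choose n d * numDerangements d * d ! with hG
  have hCpos : 0 < (s - 1)! * (n - d) ^ (d - s) * (d - 1)! := by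
    have : 0 < n - d := by omega
    positivity
  rcases le_or_gt (s - m) (d - t) with hcase | hcase
  · -- Case 1 : b ≤ w
    have hau : t - m ≤ d - s := by omega
    have C4 : Nat.choose s m * t ! ≤ d ! := by
      have hb : s - m ≤ d := by omega
      have e : Nat.choose d (s - m) * (s - m)! * (d - (s - m))! = d ! :=
        Nat.choose_mul_factorial_mul_factorial hb
      calc Nat.choose s m * t !
          = Nat.choose s (s - m) * t ! := by rw [Nat.choose_symm hms]
        _ ≤ Nat.choose d (s - m) * (d - (s - m))! :=
            Nat.mul_le_mul (Nat.choose_le_choose _ hsd) (Nat.factorial_le (by omega))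
        _ ≤ Nat.choose d (s - m) * (s - m)! * (d - (s - m))! := by
            exact Nat.mul_le_mul_right _ (Nat.le_mul_of_pos_right _ (Nat.factorial_pos _))
        _ = d ! := e
    have C5 : Nat.choose (n - s) (t - m) ≤ 2 * (n - d) ^ (d - s) := by
      have h1 : Nat.choose (n - s) (t - m) * (t - m)! ≤ (2 * (n - d) ^ (d - s)) * (t - m)! := by
        calc Nat.choose (n - s) (t - m) * (t - m)! ≤ (n - s) ^ (t - m) :=
              choose_mul_fact_le_pow _ _
          _ ≤ (2 * (n - d)) ^ (t - m) := Nat.pow_le_pow_left (by omega) _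
          _ = 2 ^ (t - m) * (n - d) ^ (t - m) := by rw [mul_pow]
          _ ≤ (2 * (t - m)!) * (n - d) ^ (d - s) :=
              Nat.mul_le_mul (two_pow_le_two_mul_fact _) (Nat.pow_le_pow_right (by omega) hau)
          _ = (2 * (n - d) ^ (d - s)) * (t - m)! := by ring
      exact Nat.le_of_mul_le_mul_right h1 (Nat.factorial_pos _)
    have key : g n s t m r * ((s - 1)! * (n - d) ^ (d - s) * (d - 1)!) ≤
        (G * (2 * d)) * ((s - 1)! * (n - d) ^ (d - s) * (d - 1)!) := by
      calc g n s t m r * ((s - 1)! * (n - d) ^ (d - s) * (d - 1)!)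
          ≤ g n s t m r * (s ! * (n - d) ^ (d - s) * (d - 1)! * r !) := by
            apply Nat.mul_le_mul_left
            calc (s - 1)! * (n - d) ^ (d - s) * (d - 1)!
                ≤ s ! * (n - d) ^ (d - s) * (d - 1)! :=
                  Nat.mul_le_mul_right _ (Nat.mul_le_mul_right _
                    (Nat.factorial_le (by omega)))
              _ ≤ s ! * (n - d) ^ (d - s) * (d - 1)! * r ! :=
                  Nat.le_mul_of_pos_right _ (Nat.factorial_pos _)
        _ ≤ G * ((s - 1)! * (t ! * (Nat.choose s m * Nat.choose (n - s) (t - m)))) := dagger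
        _ = G * ((s - 1)! * ((Nat.choose s m * t !) * Nat.choose (n - s) (t - m))) := by ring
        _ ≤ G * ((s - 1)! * (d ! * (2 * (n - d) ^ (d - s)))) := by
            apply Nat.mul_le_mul_left
            apply Nat.mul_le_mul_left
            exact Nat.mul_le_mul C4 C5
        _ = (G * (2 * d)) * ((s - 1)! * (n - d) ^ (d - s) * (d - 1)!) := by
            rw [show d ! = d * (d - 1)! by
              rw [← Nat.succ_pred_eq_of_pos hd1, Nat.factorial_succ]; simp [Nat.succ_pred_eq_of_pos hd1]]
            ring
    have h6 : g n s t m r ≤ G * (2 * d) := Nat.le_of_mul_le_mul_right key hCpos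
    calc g n s t m r ≤ G * (2 * d) := h6
      _ ≤ G * (2 * d * n ^ (2 * K)) := by
          apply Nat.mul_le_mul_left
          exact Nat.le_mul_of_pos_right _ (by positivity)
  · -- Case 2 : w < b
    set k := (s - m) - (d - t) with hk
    have hk1 : 1 ≤ k := by omega
    have hkb : k ≤ s - m := by omega
    have hkr : k ≤ r := by omega
    have hbd : s - m ≤ d := by omega
    have hak : t - m = (d - s) + k := by omega
    have C4 : Nat.choose s m * t ! * k ! ≤ d ! * d ^ k := by
      have ht2 : t ! ≤ (d - (s - m))! * d ^ k := by
        have h := fact_le_fact_mul_pow (x := d - (s - m)) (y := d) k (by omega)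
        rwa [show d - (s - m) + k = t by omega] at h
      have e : Nat.choose d (s - m) * (s - m)! * (d - (s - m))! = d ! :=
        Nat.choose_mul_factorial_mul_factorial hbd
      calc Nat.choose s m * t ! * k !
          = Nat.choose s (s - m) * t ! * k ! := by rw [Nat.choose_symm hms]
        _ ≤ Nat.choose d (s - m) * ((d - (s - m))! * d ^ k) * (s - m)! :=
            Nat.mul_le_mul (Nat.mul_le_mul (Nat.choose_le_choose _ hsd) ht2)
              (Nat.factorial_le hkb)
        _ = (Nat.choose d (s - m) * (s - m)! * (d - (s - m))!) * d ^ k := by ring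
        _ = d ! * d ^ k := by rw [e]
    have C5 : Nat.choose (n - s) (t - m) * k ! ≤ (2 * (n - d) ^ (d - s)) * n ^ k := by
      have hdvd : (d - s)! * k ! ∣ ((d - s) + k)! :=
        Nat.factorial_mul_factorial_dvd_factorial_add _ _
      have hfle : (d - s)! * k ! ≤ (t - m)! := by
        rw [hak]; exact Nat.le_of_dvd (Nat.factorial_pos _) hdvd
      have h1 : Nat.choose (n - s) (t - m) * k ! * (d - s)! ≤
          ((2 * (n - d) ^ (d - s)) * n ^ k) * (d - s)! := by
        calc Nat.choose (n - s) (t - m) * k ! * (d - s)!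
            = Nat.choose (n - s) (t - m) * ((d - s)! * k !) := by ring
          _ ≤ Nat.choose (n - s) (t - m) * (t - m)! := Nat.mul_le_mul_left _ hfle
          _ ≤ (n - s) ^ (t - m) := choose_mul_fact_le_pow _ _
          _ ≤ n ^ (t - m) := Nat.pow_le_pow_left (by omega) _
          _ = n ^ (d - s) * n ^ k := by rw [hak, pow_add]
          _ ≤ (2 * (n - d)) ^ (d - s) * n ^ k :=
              Nat.mul_le_mul_right _ (Nat.pow_le_pow_left (by omega) _)
          _ = 2 ^ (d - s) * (n - d) ^ (d - s) * n ^ k := by rw [mul_pow]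
          _ ≤ (2 * (d - s)!) * (n - d) ^ (d - s) * n ^ k :=
              Nat.mul_le_mul_right _ (Nat.mul_le_mul_right _ (two_pow_le_two_mul_fact _))
          _ = ((2 * (n - d) ^ (d - s)) * n ^ k) * (d - s)! := by ring
      exact Nat.le_of_mul_le_mul_right h1 (Nat.factorial_pos _)
    have hd_fact : d * (d - 1)! = d ! := Nat.mul_factorial_pred (by omega)
    have key : (g n s t m r * k ! ^ 3) * ((s - 1)! * (n - d) ^ (d - s) * (d - 1)!) ≤
        ((G * (2 * d)) * (d ^ k * n ^ k)) * ((s - 1)! * (n - d) ^ (d - s) * (d - 1)!) := by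
      calc (g n s t m r * k ! ^ 3) * ((s - 1)! * (n - d) ^ (d - s) * (d - 1)!)
          = g n s t m r * (((s - 1)! * (n - d) ^ (d - s) * (d - 1)! * k !) * (k ! * k !)) := by
            ring
        _ ≤ g n s t m r * ((s ! * (n - d) ^ (d - s) * (d - 1)! * r !) * (k ! * k !)) := by
            apply Nat.mul_le_mul_left
            apply Nat.mul_le_mul_right
            exact Nat.mul_le_mul
              (Nat.mul_le_mul_right _ (Nat.mul_le_mul_right _
                (Nat.factorial_le (by omega)))) (Nat.factorial_le hkr)
        _ = (g n s t m r * (s ! * (n - d) ^ (d - s) * (d - 1)! * r !)) * (k ! * k !) := by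
            ring
        _ ≤ (G * ((s - 1)! * (t ! * (Nat.choose s m * Nat.choose (n - s) (t - m))))) *
              (k ! * k !) := Nat.mul_le_mul_right _ dagger
        _ = G * ((s - 1)! * ((Nat.choose s m * t ! * k !) *
              (Nat.choose (n - s) (t - m) * k !))) := by ring
        _ ≤ G * ((s - 1)! * ((d ! * d ^ k) * ((2 * (n - d) ^ (d - s)) * n ^ k))) := by
            apply Nat.mul_le_mul_left
            apply Nat.mul_le_mul_left
            exact Nat.mul_le_mul C4 C5
        _ = ((G * (2 * d)) * (d ^ k * n ^ k)) *
              ((s - 1)! * (n - d) ^ (d - s) * (d - 1)!) := by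
            rw [← hd_fact]; ring
    have h6 : g n s t m r * k ! ^ 3 ≤ (G * (2 * d)) * (d ^ k * n ^ k) :=
      Nat.le_of_mul_le_mul_right key hCpos
    have h7 : g n s t m r * k ! ^ 3 ≤ (G * (2 * d * n ^ (2 * K))) * k ! ^ 3 := by
      calc g n s t m r * k ! ^ 3 ≤ (G * (2 * d)) * (d ^ k * n ^ k) := h6
        _ ≤ (G * (2 * d)) * (n ^ k * n ^ k) := by
            apply Nat.mul_le_mul_left
            exact Nat.mul_le_mul_right _ (Nat.pow_le_pow_left hdn _)
        _ = (G * (2 * d)) * n ^ (2 * k) := by rw [← pow_add]; ring_nf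
        _ ≤ (G * (2 * d)) * (k ! ^ 3 * n ^ (2 * K)) :=
            Nat.mul_le_mul_left _ (pow_le_fact_cube n hn9 k)
        _ = (G * (2 * d * n ^ (2 * K))) * k ! ^ 3 := by ring
    exact Nat.le_of_mul_le_mul_right h7 (by positivity)

end AuxNat

section AuxAnalytic
open Filter Asymptotics Real


lemma littleo_main :
    (fun x : ℝ => (2 * x ^ ((3:ℝ)/4) + 1) * Real.log x) =o[atTop] (fun x : ℝ => x) := by
  have h₁ : Real.log =o[atTop] fun x : ℝ => x ^ ((1:ℝ)/4) :=
    isLittleO_log_rpow_atTop (by norm_num)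
  have h₂ : (fun x : ℝ => x ^ ((3:ℝ)/4) * Real.log x) =o[atTop] (fun x : ℝ => x) := by
    have h := (Asymptotics.isBigO_refl (fun x : ℝ => x ^ ((3:ℝ)/4)) atTop).mul_isLittleO h₁
    refine h.trans_eventuallyEq ?_
    filter_upwards [eventually_gt_atTop (0:ℝ)] with x hx
    rw [← Real.rpow_add hx]; norm_num
  have h₃ : Real.log =o[atTop] (fun x : ℝ => x) := by
    have h := isLittleO_log_rpow_atTop (r := 1) one_pos
    refine h.trans_eventuallyEq ?_
    filter_upwards [eventually_gt_atTop (0:ℝ)] with x hx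
    exact Real.rpow_one x
  have h₄ := (h₂.const_mul_left 2).add h₃
  refine h₄.congr' ?_ EventuallyEq.rfl
  filter_upwards [eventually_gt_atTop (0:ℝ)] with x hx
  ring

lemma asymptotic (c : ℝ) (hc : 0 < c) :
    ∃ N : ℕ, ∀ n : ℕ, N ≤ n → 1 ≤ n →
      ((n : ℝ)) ^ (2 * Nat.sqrt (n * Nat.sqrt n) + 1) ≤ (2:ℝ) ^ (c * n) := by
  have hlog2 : (0:ℝ) < Real.log 2 := Real.log_pos (by norm_num)
  have hev : ∀ᶠ x : ℝ in atTop, ‖(2 * x ^ ((3:ℝ)/4) + 1) * Real.log x‖ ≤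
      (c * Real.log 2) * ‖x‖ := littleo_main.def (by positivity)
  have hevn : ∀ᶠ n : ℕ in atTop, ‖(2 * (n:ℝ) ^ ((3:ℝ)/4) + 1) * Real.log n‖ ≤
      (c * Real.log 2) * ‖(n:ℝ)‖ := tendsto_natCast_atTop_atTop.eventually hev
  obtain ⟨N, hN⟩ := eventually_atTop.mp hevn
  refine ⟨N, fun n hn hn1 => ?_⟩
  have hn0 : (0:ℝ) < n := by exact_mod_cast hn1
  have hn1' : (1:ℝ) ≤ n := by exact_mod_cast hn1
  set K := Nat.sqrt (n * Nat.sqrt n) with hK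
  -- K ≤ n^{3/4}
  have hKle : (K : ℝ) ≤ (n:ℝ) ^ ((3:ℝ)/4) := by
    have h1 : (K:ℝ) * K ≤ (n:ℝ) * (Nat.sqrt n : ℝ) := by
      exact_mod_cast Nat.sqrt_le (n * Nat.sqrt n)
    have h2 : (Nat.sqrt n : ℝ) ≤ (n:ℝ) ^ ((1:ℝ)/2) := by
      have h3 : (Nat.sqrt n : ℝ) * (Nat.sqrt n : ℝ) ≤ (n:ℝ) := by
        exact_mod_cast Nat.sqrt_le n
      nlinarith [Real.rpow_natCast ((n:ℝ) ^ ((1:ℝ)/2)) 2,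
        Real.rpow_nonneg hn0.le ((1:ℝ)/2), (by positivity : (0:ℝ) ≤ (Nat.sqrt n:ℝ)),
        (by rw [← Real.rpow_natCast ((n:ℝ) ^ ((1:ℝ)/2)) 2, ← Real.rpow_mul hn0.le]; norm_num :
          ((n:ℝ) ^ ((1:ℝ)/2)) ^ (2:ℕ) = (n:ℝ))]
    have h4 : (K:ℝ) * K ≤ (n:ℝ) ^ ((3:ℝ)/2) := by
      calc (K:ℝ) * K ≤ (n:ℝ) * (Nat.sqrt n : ℝ) := h1
        _ ≤ (n:ℝ) * (n:ℝ) ^ ((1:ℝ)/2) := by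
            exact mul_le_mul_of_nonneg_left h2 hn0.le
        _ = (n:ℝ) ^ ((3:ℝ)/2) := by
            rw [show ((3:ℝ)/2) = 1 + (1:ℝ)/2 by norm_num, Real.rpow_add hn0,
              Real.rpow_one]
    nlinarith [Real.rpow_nonneg hn0.le ((3:ℝ)/4), (by positivity : (0:ℝ) ≤ (K:ℝ)),
      (by rw [← Real.rpow_natCast ((n:ℝ) ^ ((3:ℝ)/4)) 2, ← Real.rpow_mul hn0.le]; norm_num :
        ((n:ℝ) ^ ((3:ℝ)/4)) ^ (2:ℕ) = (n:ℝ) ^ ((3:ℝ)/2))]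
  have hlogn : 0 ≤ Real.log n := Real.log_nonneg hn1'
  have hmain := hN n hn
  rw [Real.norm_eq_abs, Real.norm_eq_abs, abs_of_nonneg (by positivity),
    abs_of_nonneg (by positivity)] at hmain
  -- log comparison
  have hloglhs : Real.log ((n:ℝ) ^ (2 * K + 1)) ≤ Real.log ((2:ℝ) ^ (c * n)) := by
    rw [Real.log_pow, Real.log_rpow (by norm_num : (0:ℝ) < 2)]
    calc ((2 * K + 1 : ℕ) : ℝ) * Real.log n
        ≤ (2 * (n:ℝ) ^ ((3:ℝ)/4) + 1) * Real.log n := by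
          apply mul_le_mul_of_nonneg_right _ hlogn
          push_cast
          nlinarith [hKle]
      _ ≤ (c * Real.log 2) * n := hmain
      _ = c * (n:ℝ) * Real.log 2 := by ring
  have h5 : (0:ℝ) < (n:ℝ) ^ (2 * K + 1) := by positivity
  have h6 : (0:ℝ) < (2:ℝ) ^ (c * n) := Real.rpow_pos_of_pos (by norm_num) _
  exact (Real.log_le_log_iff h5 h6).mp hloglhs

end AuxAnalytic

lemma binEntropy_pos' {x : ℝ} (h0 : 0 < x) (h1 : x < 1) : 0 < binEntropy x := by
  have l1 : Real.logb 2 x < 0 := Real.logb_neg (by norm_num) h0 h1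
  have l2 : Real.logb 2 (1 - x) < 0 := Real.logb_neg (by norm_num) (by linarith) (by linarith)
  have t1 : 0 < -x * Real.logb 2 x := mul_pos_of_neg_of_neg (by linarith) l1
  have t2 : 0 < -((1 - x) * Real.logb 2 (1 - x)) := by
    have : (1 - x) * Real.logb 2 (1 - x) < 0 := mul_neg_of_pos_of_neg (by linarith) l2
    linarith
  unfold binEntropy
  linarith

/-- Lemma 7: for fixed `0 < δ < 1/2` and `0 < ε < 1/6`, for all sufficiently large `n`
with `d = δn` a positive integer, and all `s,t,m,r` in the admissible ranges (with
`⌈x⌉⁺`, the smallest nonnegative integer `≥ x`, realized via truncated natural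
subtraction), one has `g(s,t,m,r) ≤ g(d,d,d,0) · 2^{3n·h₂(3ε)}`. -/
theorem lemma7 (δ ε : ℝ) (hδ0 : 0 < δ) (hδ1 : δ < 1 / 2)
    (hε0 : 0 < ε) (hε1 : ε < 1 / 6) :
    ∃ N : ℕ, ∀ n : ℕ, N ≤ n → ∀ d : ℕ, 0 < d → (d : ℝ) = δ * n →
      ∀ s t m r : ℕ,
        1 ≤ s → s ≤ d → 1 ≤ t → t ≤ d →
        (s + t - d + 1) / 2 ≤ m → m ≤ min s t →
        s + t - m - d ≤ r → r ≤ m →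
        (g n s t m r : ℝ) ≤
          (g n d d d 0 : ℝ) * 2 ^ (3 * (n : ℝ) * binEntropy (3 * ε)) := by
  set c : ℝ := 3 * binEntropy (3 * ε) with hc
  have hcpos : 0 < c := by
    have := binEntropy_pos' (x := 3 * ε) (by linarith) (by linarith)
    positivity
  obtain ⟨N₁, hN₁⟩ := asymptotic c hcpos
  refine ⟨max N₁ 9, fun n hn d hd0 hdδ s t m r hs1 hsd ht1 htd hm1 hm2 hr1 hrm => ?_⟩
  have hn9 : 9 ≤ n := le_trans (le_max_right _ _) hn
  have hnN₁ : N₁ ≤ n := le_trans (le_max_left _ _) hn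
  have hn0 : (0:ℝ) < n := by
    have : (1:ℕ) ≤ n := by omega
    exact_mod_cast Nat.lt_of_lt_of_le Nat.zero_lt_one this
  have h2d : 2 * d ≤ n := by
    have hlt : ((2 * d : ℕ) : ℝ) < (n : ℝ) := by
      push_cast
      rw [hdδ]
      nlinarith
    exact_mod_cast le_of_lt hlt
  have hms : m ≤ s := le_trans hm2 (min_le_left _ _)
  have hmt : m ≤ t := le_trans hm2 (min_le_right _ _)
  have hr : s + t ≤ m + d + r := by omega
  have hmain := main_bound n d s t m r (by omega) h2d hn9 hs1 hsd ht1 htd hms hmt hr hrm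
  set K := Nat.sqrt (n * Nat.sqrt n) with hK
  have hstep : 2 * d * n ^ (2 * K) ≤ n ^ (2 * K + 1) := by
    rw [pow_succ]
    calc 2 * d * n ^ (2 * K) ≤ n * n ^ (2 * K) := Nat.mul_le_mul_right _ h2d
      _ = n ^ (2 * K) * n := by ring
  have hexp : ((n : ℝ)) ^ (2 * K + 1) ≤ (2:ℝ) ^ (c * n) :=
    hN₁ n hnN₁ (by omega)
  have hfinal : ((2 * d * n ^ (2 * K) : ℕ) : ℝ) ≤ (2:ℝ) ^ (3 * (n : ℝ) * binEntropy (3 * ε)) := by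
    have h1 : ((2 * d * n ^ (2 * K) : ℕ) : ℝ) ≤ ((n ^ (2 * K + 1) : ℕ) : ℝ) := by
      exact_mod_cast hstep
    have h2 : ((n ^ (2 * K + 1) : ℕ) : ℝ) = ((n:ℝ)) ^ (2 * K + 1) := by push_cast; ring
    have h3 : (2:ℝ) ^ (c * n) = (2:ℝ) ^ (3 * (n : ℝ) * binEntropy (3 * ε)) := by
      rw [show c * (n:ℝ) = 3 * (n : ℝ) * binEntropy (3 * ε) by rw [hc]; ring]
    calc ((2 * d * n ^ (2 * K) : ℕ) : ℝ) ≤ ((n ^ (2 * K + 1) : ℕ) : ℝ) := h1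
      _ = ((n:ℝ)) ^ (2 * K + 1) := h2
      _ ≤ (2:ℝ) ^ (c * n) := hexp
      _ = _ := h3
  calc (g n s t m r : ℝ) ≤ ((g n d d d 0 * (2 * d * n ^ (2 * K)) : ℕ) : ℝ) := by
        exact_mod_cast hmain
    _ = (g n d d d 0 : ℝ) * ((2 * d * n ^ (2 * K) : ℕ) : ℝ) := by push_cast; ring
    _ ≤ (g n d d d 0 : ℝ) * 2 ^ (3 * (n : ℝ) * binEntropy (3 * ε)) := by
        exact mul_le_mul_of_nonneg_left hfinal (by positivity)
end
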